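/- arXiv:1403.5187 — 4 statements merged into one kernel-verified Lean document; each statement's English description precedes it below -/
import Mathlib

section
/- For every nonzero isotropic vector v̄ ∈ V there exist a positive rational number b and vectors w₂, w₃ ∈ V such that (v̄, w₂, w₃) is an E-basis of V whose Gram matrix with respect to J is J_b, i.e. J(v̄,v̄) = J(w₂,w₃) = J(v̄,w₂) = 0, J(w₂,w₂) = b, J(v̄,w₃) = 1, J(w₃,w₃) = 0 (together with the hermitian-symmetric relations). -/
private noncomputable def quadSubfield (n : ℕ) (hn : 0 < n) : Subfield ℂ where
  carrier := {z | ∃ x y : ℚ, z = (x : ℂ) + (y : ℂ) * (Complex.I * (Real.sqrt n : ℂ))}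
  zero_mem' := ⟨0, 0, by simp⟩
  one_mem' := ⟨1, 0, by simp⟩
  add_mem' := by
    rintro a b ⟨x1, y1, rfl⟩ ⟨x2, y2, rfl⟩
    exact ⟨x1 + x2, y1 + y2, by push_cast; ring⟩
  neg_mem' := by
    rintro a ⟨x, y, rfl⟩
    exact ⟨-x, -y, by push_cast; ring⟩
  mul_mem' := by
    rintro a b ⟨x1, y1, rfl⟩ ⟨x2, y2, rfl⟩
    have ht2 : (Complex.I * (Real.sqrt n : ℂ)) ^ 2 = -(n : ℂ) := by
      have h2 : ((Real.sqrt n : ℝ) : ℂ) ^ 2 = ((n : ℝ) : ℂ) := by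
        rw [← Complex.ofReal_pow, Real.sq_sqrt (by positivity)]
      rw [mul_pow, Complex.I_sq, h2]; push_cast; ring
    exact ⟨x1 * x2 - n * y1 * y2, x1 * y2 + y1 * x2, by
      push_cast; linear_combination (y1 * y2 : ℂ) * ht2⟩
  inv_mem' := by
    rintro a ⟨x, y, rfl⟩
    by_cases ha : (x : ℂ) + (y : ℂ) * (Complex.I * (Real.sqrt n : ℂ)) = 0
    · exact ⟨0, 0, by simp [ha]⟩
    have ht2 : (Complex.I * (Real.sqrt n : ℂ)) ^ 2 = -(n : ℂ) := by
      have h2 : ((Real.sqrt n : ℝ) : ℂ) ^ 2 = ((n : ℝ) : ℂ) := by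
        rw [← Complex.ofReal_pow, Real.sq_sqrt (by positivity)]
      rw [mul_pow, Complex.I_sq, h2]; push_cast; ring
    have hd : (x : ℚ) ^ 2 + n * y ^ 2 ≠ 0 := by
      intro h
      have hnQ : (0:ℚ) < n := by exact_mod_cast hn
      have hy : y = 0 := by
        by_contra hy
        have h1 : 0 < (n:ℚ) * y ^ 2 := mul_pos hnQ (by positivity)
        nlinarith [sq_nonneg x]
      have hx : x = 0 := by
        have : x ^ 2 = 0 := by rw [hy] at h; linarith
        exact pow_eq_zero_iff (by norm_num) |>.mp this
      exact ha (by simp [hx, hy])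
    have hdC : ((x : ℚ) ^ 2 + n * y ^ 2 : ℚ) ≠ (0 : ℚ) := hd
    have hdC' : ((x : ℂ)) ^ 2 + (n : ℂ) * (y : ℂ) ^ 2 ≠ 0 := by
      intro h; apply hd; exact_mod_cast h
    refine ⟨x / (x ^ 2 + n * y ^ 2), -y / (x ^ 2 + n * y ^ 2),
      inv_eq_of_mul_eq_one_right ?_⟩
    push_cast
    have hdC'' : (x:ℂ)^2 + (y:ℂ)^2 * (n:ℂ) ≠ 0 := by rw [mul_comm]; exact hdC'
    field_simp
    linear_combination (-(y:ℂ)^2) * ht2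

private theorem mem_quad (n : ℕ) (hn : 0 < n) (E : Subfield ℂ)
    (hE : E = Subfield.closure {Complex.I * (Real.sqrt n : ℂ)}) (a : E) :
    ∃ x y : ℚ, (a : ℂ) = (x : ℂ) + (y : ℂ) * (Complex.I * (Real.sqrt n : ℂ)) := by
  have hle : E ≤ quadSubfield n hn := by
    rw [hE, Subfield.closure_le]
    rintro z rfl
    exact ⟨0, 1, by simp⟩
  exact hle a.2

private theorem rat_of_conj_fixed (n : ℕ) (hn : 0 < n) (E : Subfield ℂ)
    (hE : E = Subfield.closure {Complex.I * (Real.sqrt n : ℂ)}) (a : E)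
    (hc : starRingEnd ℂ (a : ℂ) = (a : ℂ)) : ∃ q : ℚ, (a : ℂ) = (q : ℂ) := by
  obtain ⟨x, y, hxy⟩ := mem_quad n hn E hE a
  have hs : (0:ℝ) < Real.sqrt n := Real.sqrt_pos.mpr (by positivity)
  have him : (a : ℂ).im = y * Real.sqrt n := by
    rw [hxy]; simp
  have him0 : (a : ℂ).im = 0 := by
    have := congrArg Complex.im hc
    simp [Complex.conj_im] at this
    linarith
  have hy : y = 0 := by
    rw [him] at him0
    rcases mul_eq_zero.mp him0 with h | h
    · exact_mod_cast h
    · exact absurd h (ne_of_gt hs)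
  exact ⟨x, by rw [hxy, hy]; simp⟩


set_option maxHeartbeats 1000000
set_option synthInstance.maxHeartbeats 1000000

/-- With `E = ℚ(i√n) ⊆ ℂ`, `V` a 3-dimensional `E`-vector space and `J` a
hermitian form of signature `(2,1)`: every nonzero isotropic vector `v̄` can be completed
to an `E`-basis `(v̄, w₂, w₃)` of `V` whose Gram matrix is `J_b` (rows `(0,0,1)`, `(0,b,0)`,
`(1,0,0)`) for some positive rational `b`. -/
theorem isotropic_vector_parabolic_basis
    (n : ℕ) (hn : 0 < n) (hsq : Squarefree n)
    (E : Subfield ℂ)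
    (hE : E = Subfield.closure {Complex.I * (Real.sqrt n : ℂ)})
    (σ : E →+* E)
    (hσ : ∀ a : E, (σ a : ℂ) = starRingEnd ℂ (a : ℂ))
    (V : Type*) [AddCommGroup V] [Module E V]
    (J : V → V → E)
    (haddl : ∀ u v w : V, J (u + v) w = J u w + J v w)
    (haddr : ∀ u v w : V, J u (v + w) = J u v + J u w)
    (hsmull : ∀ (a : E) (v w : V), J (a • v) w = σ a * J v w)
    (hsmulr : ∀ (a : E) (v w : V), J v (a • w) = a * J v w)
    (hherm : ∀ v w : V, J w v = σ (J v w))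
    (bV : Module.Basis (Fin 3) E V)
    (horth : ∀ i j : Fin 3, i ≠ j → J (bV i) (bV j) = 0)
    (h1 : ∃ q : ℚ, 0 < q ∧ (J (bV 0) (bV 0) : ℂ) = (q : ℂ))
    (h2 : ∃ q : ℚ, 0 < q ∧ (J (bV 1) (bV 1) : ℂ) = (q : ℂ))
    (h3 : ∃ q : ℚ, q < 0 ∧ (J (bV 2) (bV 2) : ℂ) = (q : ℂ)) :
    ∀ vbar : V, vbar ≠ 0 → J vbar vbar = 0 →
      ∃ (b : ℚ), 0 < b ∧ ∃ w₂ w₃ : V, ∃ B : Module.Basis (Fin 3) E V,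
        B 0 = vbar ∧ B 1 = w₂ ∧ B 2 = w₃ ∧
        J vbar vbar = 0 ∧ J vbar w₂ = 0 ∧ J vbar w₃ = 1 ∧
        J w₂ vbar = 0 ∧ J w₂ w₂ = (b : E) ∧ J w₂ w₃ = 0 ∧
        J w₃ vbar = 1 ∧ J w₃ w₂ = 0 ∧ J w₃ w₃ = 0 := by
  classical
  intro vbar hv0 hiso
  obtain ⟨q1, hq1, he1⟩ := h1
  obtain ⟨q2, hq2, he2⟩ := h2
  obtain ⟨q3, hq3, he3⟩ := h3
  have hσinj : Function.Injective σ := σ.injective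
  -- basic linearity lemmas
  have hJ0l : ∀ w : V, J 0 w = 0 := by
    intro w
    have h := hsmull 0 w w
    simpa using h
  have hJ0r : ∀ w : V, J w 0 = 0 := by
    intro w
    have h := hsmulr 0 w w
    simpa using h
  have hsubl : ∀ u v w : V, J (u - v) w = J u w - J v w := by
    intro u v w
    have h := haddl u ((-1 : E) • v) w
    rw [hsmull] at h
    simpa [sub_eq_add_neg, neg_one_smul, neg_one_mul] using h
  have hsubr : ∀ u v w : V, J u (v - w) = J u v - J u w := by
    intro u v w
    have h := haddr u v ((-1 : E) • w)
    rw [hsmulr] at h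
    simpa [sub_eq_add_neg, neg_one_smul, neg_one_mul] using h
  have hsuml : ∀ (s : Finset (Fin 3)) (f : Fin 3 → V) (w : V),
      J (∑ i ∈ s, f i) w = ∑ i ∈ s, J (f i) w := by
    intro s f w
    induction s using Finset.induction_on with
    | empty => simpa using hJ0l w
    | insert _ _ h ih => rw [Finset.sum_insert h, haddl, ih, Finset.sum_insert h]
  -- diagonal entries are nonzero
  have hneAux : ∀ (i : Fin 3) (q : ℚ), q ≠ 0 → ((J (bV i) (bV i) : ℂ) = (q : ℂ)) →
      J (bV i) (bV i) ≠ 0 := by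
    intro i q hq hqe h
    rw [h] at hqe
    simp at hqe
    exact hq (by exact_mod_cast hqe.symm)
  have hne : ∀ i : Fin 3, J (bV i) (bV i) ≠ 0 := by
    intro i
    fin_cases i
    · exact hneAux 0 q1 (ne_of_gt hq1) he1
    · exact hneAux 1 q2 (ne_of_gt hq2) he2
    · exact hneAux 2 q3 (ne_of_lt hq3) he3
  -- find u with J vbar u = 1
  have hcoeff : ∀ j, J vbar (bV j) = σ (bV.repr vbar j) * J (bV j) (bV j) := by
    intro j
    conv_lhs => rw [← bV.sum_repr vbar]
    rw [hsuml, Finset.sum_eq_single j]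
    · rw [hsmull]
    · intro i _ hij
      rw [hsmull, horth i j hij, mul_zero]
    · intro h
      exact absurd (Finset.mem_univ j) h
  have hex : ∃ j, J vbar (bV j) ≠ 0 := by
    by_contra hall
    push_neg at hall
    apply hv0
    have hz : ∀ j, bV.repr vbar j = 0 := by
      intro j
      have h := hall j
      rw [hcoeff j] at h
      rcases mul_eq_zero.mp h with h' | h'
      · exact hσinj (by simpa using h')
      · exact absurd h' (hne j)
    have hz' : bV.repr vbar = 0 := Finsupp.ext hz
    exact bV.repr.map_eq_zero_iff.mp hz'
  obtain ⟨j, hj⟩ := hex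
  obtain ⟨u, hu⟩ : ∃ u : V, u = (J vbar (bV j))⁻¹ • bV j := ⟨_, rfl⟩
  have hvu : J vbar u = 1 := by
    rw [hu, hsmulr, inv_mul_cancel₀ hj]
  have huv : J u vbar = 1 := by rw [hherm, hvu, map_one]
  -- construct w₃
  obtain ⟨m, hm⟩ : ∃ m : E, m = J u u := ⟨_, rfl⟩
  have hmfix : σ m = m := by rw [hm]; exact (hherm u u).symm
  obtain ⟨w₃, hw3⟩ : ∃ w₃ : V, w₃ = u - (m / 2) • vbar := ⟨_, rfl⟩
  have hσc : σ (m / 2) = m / 2 := by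
    rw [map_div₀, hmfix, map_ofNat]
  have hvw3 : J vbar w₃ = 1 := by
    rw [hw3, hsubr, hsmulr, hiso, mul_zero, sub_zero, hvu]
  have hw3v : J w₃ vbar = 1 := by rw [hherm, hvw3, map_one]
  have hw3w3 : J w₃ w₃ = 0 := by
    rw [hw3]
    simp only [hsubl, hsubr, hsmull, hsmulr]
    rw [hiso, hvu, huv, ← hm, hσc]
    ring
  -- finrank facts
  haveI : FiniteDimensional E V := Module.Finite.of_basis bV
  have hfr : Module.finrank E V = 3 := by
    rw [Module.finrank_eq_card_basis bV, Fintype.card_fin]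
  -- pick a basis vector outside the span of vbar and w₃
  have hexi : ∃ i : Fin 3, bV i ∉ Submodule.span E (Set.range ![vbar, w₃]) := by
    by_contra hall
    push_neg at hall
    have hSle : Module.finrank E (Submodule.span E (Set.range ![vbar, w₃])) ≤ 2 := by
      simpa [Set.finrank] using finrank_range_le_card (R := E) ![vbar, w₃]
    have htop : Submodule.span E (Set.range ![vbar, w₃]) = ⊤ := by
      refine le_antisymm le_top ?_
      rw [← bV.span_eq]
      exact Submodule.span_le.mpr (by rintro y ⟨i, rfl⟩; exact hall i)
    rw [htop, finrank_top, hfr] at hSle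
    omega
  obtain ⟨i₀, hi₀⟩ := hexi
  -- construct w₂
  obtain ⟨w₂, hw2⟩ :
      ∃ w₂ : V, w₂ = bV i₀ - (J w₃ (bV i₀)) • vbar - (J vbar (bV i₀)) • w₃ := ⟨_, rfl⟩
  have hvw2 : J vbar w₂ = 0 := by
    rw [hw2]
    simp only [hsubr, hsmulr]
    rw [hiso, hvw3]
    ring
  have hw3w2 : J w₃ w₂ = 0 := by
    rw [hw2]
    simp only [hsubr, hsmulr]
    rw [hw3v, hw3w3]
    ring
  have hw2v : J w₂ vbar = 0 := by rw [hherm, hvw2, map_zero]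
  have hw2w3 : J w₂ w₃ = 0 := by rw [hherm, hw3w2, map_zero]
  have hw2ne : w₂ ≠ 0 := by
    intro h
    apply hi₀
    rw [Submodule.mem_span_range_iff_exists_fun]
    refine ⟨![J w₃ (bV i₀), J vbar (bV i₀)], ?_⟩
    have hx0 : bV i₀ - ((J w₃ (bV i₀)) • vbar + (J vbar (bV i₀)) • w₃) = 0 := by
      rw [← sub_sub, ← hw2, h]
    have hx' : bV i₀ = (J w₃ (bV i₀)) • vbar + (J vbar (bV i₀)) • w₃ := by
      rw [sub_eq_zero] at hx0
      exact hx0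
    rw [Fin.sum_univ_two]
    simp only [Matrix.cons_val_zero, Matrix.cons_val_one, Matrix.head_cons]
    exact hx'.symm
  -- J w₂ w₂ is a rational number
  have hcfix : σ (J w₂ w₂) = J w₂ w₂ := (hherm w₂ w₂).symm
  have hcconj : starRingEnd ℂ ((J w₂ w₂ : E) : ℂ) = ((J w₂ w₂ : E) : ℂ) := by
    rw [← hσ, hcfix]
  obtain ⟨b, hbC⟩ := rat_of_conj_fixed n hn E hE (J w₂ w₂) hcconj
  have hcb : J w₂ w₂ = (b : E) := by
    apply Subtype.ext
    rw [hbC]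
    exact (SubfieldClass.coe_ratCast E b).symm
  -- linear independence of the pair (vbar, w₂)
  have hli2 : LinearIndependent E ![vbar, w₂] := by
    rw [Fintype.linearIndependent_iff]
    intro g hg
    rw [Fin.sum_univ_two] at hg
    simp only [Matrix.cons_val_zero, Matrix.cons_val_one, Matrix.head_cons] at hg
    have h0 : g 0 = 0 := by
      have h := congrArg (J w₃) hg
      rw [haddr, hsmulr, hsmulr, hw3v, hw3w2, hJ0r] at h
      simpa using h
    have h1' : g 1 = 0 := by
      rw [h0, zero_smul, zero_add] at hg
      rcases smul_eq_zero.mp hg with h | h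
      · exact h
      · exact absurd h hw2ne
    intro i
    fin_cases i
    · exact h0
    · exact h1'
  -- positivity of b
  have hbpos : 0 < b := by
    by_contra hble
    push_neg at hble
    have hliQ : LinearIndependent E ![bV 0, bV 1] := by
      have hcomp : ![bV 0, bV 1] = bV ∘ ![0, 1] := by
        ext i
        fin_cases i <;> simp
      rw [hcomp]
      exact bV.linearIndependent.comp ![0, 1] (by decide)
    have hfrP : Module.finrank E (Submodule.span E (Set.range ![vbar, w₂])) = 2 := by
      rw [finrank_span_eq_card hli2, Fintype.card_fin]
    have hfrQ : Module.finrank E (Submodule.span E (Set.range ![bV 0, bV 1])) = 2 := by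
      rw [finrank_span_eq_card hliQ, Fintype.card_fin]
    have hinf : 1 ≤ Module.finrank E
        ↥(Submodule.span E (Set.range ![vbar, w₂]) ⊓ Submodule.span E (Set.range ![bV 0, bV 1])) := by
      have hsum := Submodule.finrank_sup_add_finrank_inf_eq
        (Submodule.span E (Set.range ![vbar, w₂])) (Submodule.span E (Set.range ![bV 0, bV 1]))
      have hsup : Module.finrank E
          ↥(Submodule.span E (Set.range ![vbar, w₂]) ⊔ Submodule.span E (Set.range ![bV 0, bV 1])) ≤ 3 := by
        exact le_trans (Submodule.finrank_le _) (le_of_eq hfr)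
      omega
    have hzex : ∃ z ∈ Submodule.span E (Set.range ![vbar, w₂]) ⊓ Submodule.span E (Set.range ![bV 0, bV 1]),
        z ≠ (0 : V) := by
      rw [← Submodule.ne_bot_iff]
      intro h
      rw [h] at hinf
      simp [finrank_bot] at hinf
    obtain ⟨z, hzPQ, hz0⟩ := hzex
    have hzP : z ∈ Submodule.span E (Set.range ![vbar, w₂]) := hzPQ.1
    have hzQ : z ∈ Submodule.span E (Set.range ![bV 0, bV 1]) := hzPQ.2
    obtain ⟨cf, hcf⟩ := (Submodule.mem_span_range_iff_exists_fun (R := E)).mp hzP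
    obtain ⟨df, hdf⟩ := (Submodule.mem_span_range_iff_exists_fun (R := E)).mp hzQ
    rw [Fin.sum_univ_two] at hcf hdf
    simp only [Matrix.cons_val_zero, Matrix.cons_val_one, Matrix.head_cons] at hcf hdf
    have hJz1 : J z z = σ (cf 1) * (cf 1) * J w₂ w₂ := by
      rw [← hcf]
      simp only [haddl, haddr, hsmull, hsmulr]
      rw [hiso, hvw2, hw2v]
      ring
    have hJz2 : J z z = σ (df 0) * (df 0) * J (bV 0) (bV 0)
        + σ (df 1) * (df 1) * J (bV 1) (bV 1) := by
      rw [← hdf]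
      simp only [haddl, haddr, hsmull, hsmulr]
      rw [horth 0 1 (by decide), horth 1 0 (by decide)]
      ring
    have hEq : σ (cf 1) * (cf 1) * J w₂ w₂ = σ (df 0) * (df 0) * J (bV 0) (bV 0)
        + σ (df 1) * (df 1) * J (bV 1) (bV 1) := by
      rw [← hJz1, hJz2]
    have hEqC : (starRingEnd ℂ ((cf 1 : E) : ℂ)) * ((cf 1 : E) : ℂ) * (b : ℂ)
        = (starRingEnd ℂ ((df 0 : E) : ℂ)) * ((df 0 : E) : ℂ) * (q1 : ℂ)
          + (starRingEnd ℂ ((df 1 : E) : ℂ)) * ((df 1 : E) : ℂ) * (q2 : ℂ) := by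
      have h := congrArg (fun e : E => (e : ℂ)) hEq
      push_cast at h
      rw [hσ, hσ, hσ, hbC, he1, he2] at h
      exact h
    have key : ((Complex.normSq ((cf 1 : E) : ℂ) * (b : ℝ) : ℝ) : ℂ)
        = ((Complex.normSq ((df 0 : E) : ℂ) * (q1 : ℝ)
            + Complex.normSq ((df 1 : E) : ℂ) * (q2 : ℝ) : ℝ) : ℂ) := by
      push_cast
      rw [Complex.normSq_eq_conj_mul_self, Complex.normSq_eq_conj_mul_self,
        Complex.normSq_eq_conj_mul_self]
      linear_combination hEqC
    have keyR : Complex.normSq ((cf 1 : E) : ℂ) * (b : ℝ)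
        = Complex.normSq ((df 0 : E) : ℂ) * (q1 : ℝ)
          + Complex.normSq ((df 1 : E) : ℂ) * (q2 : ℝ) :=
      Complex.ofReal_inj.mp key
    have hbR : (b : ℝ) ≤ 0 := by exact_mod_cast hble
    have hq1R : (0 : ℝ) < (q1 : ℝ) := by exact_mod_cast hq1
    have hq2R : (0 : ℝ) < (q2 : ℝ) := by exact_mod_cast hq2
    have hna : Complex.normSq ((df 0 : E) : ℂ) = 0 := by
      nlinarith [Complex.normSq_nonneg ((cf 1 : E) : ℂ), Complex.normSq_nonneg ((df 0 : E) : ℂ),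
        Complex.normSq_nonneg ((df 1 : E) : ℂ),
        mul_nonneg (Complex.normSq_nonneg ((cf 1 : E) : ℂ)) (neg_nonneg.mpr hbR)]
    have hna' : Complex.normSq ((df 1 : E) : ℂ) = 0 := by
      nlinarith [Complex.normSq_nonneg ((cf 1 : E) : ℂ), Complex.normSq_nonneg ((df 0 : E) : ℂ),
        Complex.normSq_nonneg ((df 1 : E) : ℂ),
        mul_nonneg (Complex.normSq_nonneg ((cf 1 : E) : ℂ)) (neg_nonneg.mpr hbR)]
    have ha0 : df 0 = 0 := Subtype.ext (Complex.normSq_eq_zero.mp hna)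
    have ha'0 : df 1 = 0 := Subtype.ext (Complex.normSq_eq_zero.mp hna')
    apply hz0
    rw [← hdf, ha0, ha'0, zero_smul, zero_smul, add_zero]
  -- linear independence of the triple
  have hli3 : LinearIndependent E ![vbar, w₂, w₃] := by
    rw [Fintype.linearIndependent_iff]
    intro g hg
    rw [Fin.sum_univ_three] at hg
    simp only [Matrix.cons_val_zero, Matrix.cons_val_one, Matrix.head_cons,
      Matrix.cons_val_two, Matrix.tail_cons] at hg
    have h2' : g 2 = 0 := by
      have h := congrArg (J vbar) hg
      rw [haddr, haddr, hsmulr, hsmulr, hsmulr, hiso, hvw2, hvw3, hJ0r] at h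
      simpa using h
    have h0 : g 0 = 0 := by
      have h := congrArg (J w₃) hg
      rw [haddr, haddr, hsmulr, hsmulr, hsmulr, hw3v, hw3w2, hw3w3, hJ0r] at h
      simpa using h
    have h1' : g 1 = 0 := by
      rw [h0, h2', zero_smul, zero_smul, zero_add, add_zero] at hg
      rcases smul_eq_zero.mp hg with h | h
      · exact h
      · exact absurd h hw2ne
    intro i
    fin_cases i
    · exact h0
    · exact h1'
    · exact h2'
  -- assemble the basis
  have hcard : Fintype.card (Fin 3) = Module.finrank E V := by
    rw [hfr, Fintype.card_fin]
  refine ⟨b, hbpos, w₂, w₃, basisOfLinearIndependentOfCardEqFinrank hli3 hcard,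
    ?_, ?_, ?_, hiso, hvw2, hvw3, hw2v, hcb, hw2w3, hw3v, hw3w2, hw3w3⟩ <;>
    rw [coe_basisOfLinearIndependentOfCardEqFinrank] <;> simp
end

section
/- The set P_b is path connected (as a subspace of M₃(ℂ) with its usual topology). -/
open Matrix

/-- The hermitian matrix `J_b` with rows `(0,0,1)`, `(0,b,0)`, `(1,0,0)`. -/
noncomputable def Jb (b : ℝ) : Matrix (Fin 3) (Fin 3) ℂ :=
  !![0, 0, 1; 0, (b : ℂ), 0; 1, 0, 0]

/-- `P_b`: matrices of the shape `[[|z|², w₁, w₂], [0, z, w₃], [0, 0, 1]]` with `z ≠ 0`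
which are similitudes of `J_b`; it is the group of real points of the boundary component
group `P_D` of the Picard Shimura datum. -/
noncomputable def Pb (b : ℝ) : Set (Matrix (Fin 3) (Fin 3) ℂ) :=
  {g | (∃ z w₁ w₂ w₃ : ℂ, z ≠ 0 ∧
          g = !![((Complex.normSq z : ℝ) : ℂ), w₁, w₂; 0, z, w₃; 0, 0, 1]) ∧
       ∃ χ : ℂ, gᴴ * Jb b * g = χ • Jb b}

private noncomputable def fbAux (b : ℝ) (z w : ℂ) (t : ℝ) : Matrix (Fin 3) (Fin 3) ℂ :=
  !![((Complex.normSq z : ℝ) : ℂ), -(b:ℂ) * z * (starRingEnd ℂ) w,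
     ((-(b * Complex.normSq w)/2 : ℝ) : ℂ) + (t : ℂ) * Complex.I;
    0, z, w; 0, 0, 1]

private lemma fbAux_similitude (b : ℝ) (z w : ℂ) (t : ℝ) :
    (fbAux b z w t)ᴴ * Jb b * fbAux b z w t = ((Complex.normSq z : ℝ) : ℂ) • Jb b := by
  ext i j
  fin_cases i <;> fin_cases j <;>
    simp [fbAux, Jb, Matrix.mul_apply, Fin.sum_univ_three, Matrix.conjTranspose_apply,
      Matrix.vecHead, Matrix.vecTail] <;>
    ring_nf <;>
    simp [Complex.conj_ofReal, _root_.map_mul, map_div₀, Complex.normSq_eq_conj_mul_self,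
      map_ofNat] <;>
    ring_nf


/-- `P_b` is path connected. -/
theorem Pb_isPathConnected (b : ℝ) (hb : 0 < b) : IsPathConnected (Pb b) := by
  have hc : Continuous fun p : ℂ × ℂ × ℝ => fbAux b (Complex.exp p.1) p.2.1 p.2.2 := by
    apply continuous_matrix
    intro i j
    have h1 : Continuous fun p : ℂ × ℂ × ℝ => Complex.exp p.1 :=
      Complex.continuous_exp.comp continuous_fst
    have h2 : Continuous fun p : ℂ × ℂ × ℝ => p.2.1 := continuous_fst.comp continuous_snd
    have h3 : Continuous fun p : ℂ × ℂ × ℝ => p.2.2 := continuous_snd.comp continuous_snd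
    fin_cases i <;> fin_cases j <;>
      simp [fbAux, Matrix.vecHead, Matrix.vecTail] <;>
      first
      | exact continuous_const
      | exact h1
      | exact h2
      | exact Complex.continuous_ofReal.comp (Complex.continuous_normSq.comp h1)
      | exact ((continuous_const.mul h1).mul (Complex.continuous_conj.comp h2)).neg
      | exact (((continuous_const.mul (Complex.continuous_ofReal.comp
          (Complex.continuous_normSq.comp h2))).neg.div_const 2)).add
          ((Complex.continuous_ofReal.comp h3).mul continuous_const)
  have himg : (fun p : ℂ × ℂ × ℝ => fbAux b (Complex.exp p.1) p.2.1 p.2.2) '' Set.univ = Pb b := by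
    ext g
    simp only [Set.image_univ, Set.mem_range, Pb, Set.mem_setOf_eq]
    constructor
    · rintro ⟨⟨u, w, t⟩, rfl⟩
      exact ⟨⟨Complex.exp u, _, _, w, Complex.exp_ne_zero u, rfl⟩,
        ((Complex.normSq (Complex.exp u) : ℝ) : ℂ), fbAux_similitude b _ w t⟩
    · rintro ⟨⟨z, w₁, w₂, w₃, hz, rfl⟩, χ, hχ⟩
      have h12 := congrFun (congrFun hχ 1) 2
      have h22 := congrFun (congrFun hχ 2) 2
      simp [Jb, Matrix.mul_apply, Fin.sum_univ_three, Matrix.conjTranspose_apply,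
        Matrix.vecHead, Matrix.vecTail] at h12 h22
      -- h12 : conj w₁ + conj z * (b * w₃) = 0  (or similar)
      refine ⟨⟨Complex.log z, w₃, w₂.im⟩, ?_⟩
      have hez : Complex.exp (Complex.log z) = z := Complex.exp_log hz
      have hw₁ : w₁ = -(b:ℂ) * z * (starRingEnd ℂ) w₃ := by
        have := congrArg (starRingEnd ℂ) h12
        simp only [map_add, _root_.map_mul, map_zero, Complex.conj_conj, map_ofNat,
          Complex.conj_ofReal] at this
        linear_combination this
      have hw₂ : w₂ = ((-(b * Complex.normSq w₃)/2 : ℝ) : ℂ) + (w₂.im : ℂ) * Complex.I := by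
        have hre := congrArg Complex.re h22
        simp only [Complex.add_re, Complex.mul_re, Complex.mul_im, Complex.conj_re,
          Complex.conj_im, Complex.ofReal_re, Complex.ofReal_im, Complex.zero_re] at hre
        apply Complex.ext
        · simp [Complex.normSq_apply]
          nlinarith [hre]
        · simp
      ext i j
      fin_cases i <;> fin_cases j <;> simp [fbAux, hez, hw₁] <;>
        (conv_rhs => rw [hw₂]) <;> push_cast <;> ring
  rw [← himg]
  exact isPathConnected_univ.image hc
end

section
/- The set of values {a − b : (a,b,c,d) ∈ S_p(r)} equals the interval of integers {j ∈ ℤ : 0 ≤ j ≤ M_p}. -/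
/-- `S_p(r)`: quadruples `(a,b,c,d) ∈ ℤ⁴` with `r ≥ a ≥ b ≥ c ≥ −r`,
`3r + a₋ + b₋ + c₋ ≥ −d ≥ a₊ + b₊ + c₊` and `a + b + c + 2d = −p`. -/
def Sset (r p : ℤ) : Set (ℤ × ℤ × ℤ × ℤ) :=
  {q | q.1 ≤ r ∧ q.2.1 ≤ q.1 ∧ q.2.2.1 ≤ q.2.1 ∧ -r ≤ q.2.2.1 ∧
       max q.1 0 + max q.2.1 0 + max q.2.2.1 0 ≤ -q.2.2.2 ∧
       -q.2.2.2 ≤ 3 * r + min q.1 0 + min q.2.1 0 + min q.2.2.1 0 ∧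
       q.1 + q.2.1 + q.2.2.1 + 2 * q.2.2.2 = -p}

lemma maxmin_char (x : ℤ) :
    (0 ≤ x ∧ max x 0 = x ∧ min x 0 = 0) ∨ (x ≤ 0 ∧ max x 0 = 0 ∧ min x 0 = x) := by
  rcases le_total 0 x with h | h
  · exact Or.inl ⟨h, max_eq_left h, min_eq_right h⟩
  · exact Or.inr ⟨h, max_eq_right h, min_eq_left h⟩

/-- the set of values of `a − b` on `S_p(r)` is exactly `{0, 1, …, M_p}`,
where `M_p = p` if `p ≤ r`, `M_p = r + ⌊(p−r)/2⌋` if `r < p ≤ 3r`,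
`M_p = r + ⌊(5r−p)/2⌋` if `3r < p ≤ 5r`, and `M_p = 6r − p` if `p > 5r`. -/
theorem Sset_values_a_sub_b (r p : ℤ) (hr : 1 ≤ r) (hp0 : 0 ≤ p) (hp : p ≤ 6 * r) :
    {j : ℤ | ∃ q ∈ Sset r p, q.1 - q.2.1 = j} =
      {j : ℤ | 0 ≤ j ∧ j ≤ (if p ≤ r then p
        else if p ≤ 3 * r then r + (p - r) / 2
        else if p ≤ 5 * r then r + (5 * r - p) / 2
        else 6 * r - p)} := by
  ext j
  simp only [Set.mem_setOf_eq, Sset]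
  constructor
  · rintro ⟨⟨a, b, c, d⟩, ⟨h1, h2, h3, h4, h5, h6, h7⟩, rfl⟩
    simp only at *
    rcases maxmin_char a with ⟨ha, ha1, ha2⟩ | ⟨ha, ha1, ha2⟩ <;>
      rcases maxmin_char b with ⟨hb, hb1, hb2⟩ | ⟨hb, hb1, hb2⟩ <;>
      rcases maxmin_char c with ⟨hc, hc1, hc2⟩ | ⟨hc, hc1, hc2⟩ <;>
      simp only [ha1, ha2, hb1, hb2, hc1, hc2] at h5 h6 <;>
      exact ⟨by omega, by split_ifs <;> omega⟩
  · rintro ⟨hj0, hjM⟩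
    by_cases hjr : j ≤ r
    · refine ⟨⟨j, 0, -((j + p) % 2), -((j - (j + p) % 2 + p) / 2)⟩, ?_,
        show j - 0 = j by ring⟩
      have hc : -((j + p) % 2) ≤ 0 := by omega
      simp only
      rw [max_eq_left hj0, min_eq_right hj0, max_self, min_self,
        max_eq_right hc, min_eq_left hc]
      split_ifs at hjM <;> omega
    · refine ⟨⟨r, r - j, r - j - (r + p) % 2, -((r + 2 * (r - j) - (r + p) % 2 + p) / 2)⟩,
        ?_, show r - (r - j) = j by ring⟩
      have hb : r - j ≤ 0 := by omega
      have hc : r - j - (r + p) % 2 ≤ 0 := by omega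
      simp only
      rw [max_eq_left (by omega : (0:ℤ) ≤ r), min_eq_right (by omega : (0:ℤ) ≤ r),
        max_eq_right hb, min_eq_left hb, max_eq_right hc, min_eq_left hc]
      split_ifs at hjM <;> omega
end

section
/- The set of values {b − c : (a,b,c,d) ∈ S_p(r)} equals the interval of integers {j ∈ ℤ : 0 ≤ j ≤ M_p}. -/
lemma Sset_mem_helper (r p j a b c d : ℤ)
    (h : a ≤ r ∧ b ≤ a ∧ c ≤ b ∧ -r ≤ c ∧
      max a 0 + max b 0 + max c 0 ≤ -d ∧
      -d ≤ 3 * r + min a 0 + min b 0 + min c 0 ∧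
      a + b + c + 2 * d = -p)
    (hbc : b - c = j) :
    ∃ q ∈ Sset r p, q.2.1 - q.2.2.1 = j :=
  ⟨(a, b, c, d), h, hbc⟩

/-- the set of values of `b − c` on `S_p(r)` is exactly `{0, 1, …, M_p}`,
where `M_p = p` if `p ≤ r`, `M_p = r + ⌊(p−r)/2⌋` if `r < p ≤ 3r`,
`M_p = r + ⌊(5r−p)/2⌋` if `3r < p ≤ 5r`, and `M_p = 6r − p` if `p > 5r`. -/
theorem Sset_values_b_sub_c (r p : ℤ) (hr : 1 ≤ r) (hp0 : 0 ≤ p) (hp : p ≤ 6 * r) :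
    {j : ℤ | ∃ q ∈ Sset r p, q.2.1 - q.2.2.1 = j} =
      {j : ℤ | 0 ≤ j ∧ j ≤ (if p ≤ r then p
        else if p ≤ 3 * r then r + (p - r) / 2
        else if p ≤ 5 * r then r + (5 * r - p) / 2
        else 6 * r - p)} := by
  ext j
  simp only [Set.mem_setOf_eq]
  constructor
  · rintro ⟨⟨a, b, c, d⟩, ⟨h1, h2, h3, h4, h5, h6, h7⟩, hj⟩
    simp only at *
    split_ifs <;> omega
  · rintro ⟨hj0, hjM⟩
    split_ifs at hjM
    all_goals by_cases hjr : j ≤ r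
    all_goals first
      | exact Sset_mem_helper r p j ((p + j) % 2) 0 (-j) ((j - p - (p + j) % 2) / 2)
          ⟨by omega, by omega, by omega, by omega, by omega, by omega, by omega⟩ (by omega)
      | exact Sset_mem_helper r p j (j - r + (p + r) % 2) (j - r) (-r)
          ((3 * r - 2 * j - (p + r) % 2 - p) / 2)
          ⟨by omega, by omega, by omega, by omega, by omega, by omega, by omega⟩ (by omega)
end
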